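/- With the setup of the tt*-Toda idealized Stokes matrix: if S + S^T is positive definite then all eigenvalues of R are unimodular, where -ε R^n = S S^{-T}. -/

import Mathlib

open Matrix

theorem stmt5 (n : ℕ) (hn : 2 ≤ n) (p : ℕ → ℝ)
    (hpal : ∀ k, 1 ≤ k → k ≤ n - 1 → p (n - k) = (-1 : ℝ) ^ n * p k)
    (R S : Matrix (Fin n) (Fin n) ℝ)
    (hR : ∀ i j : Fin n, R i j =
      if (j : ℕ) = 0 then
        (if (i : ℕ) = n - 1 then -(-1 : ℝ) ^ n else -p (n - 1 - (i : ℕ)))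
      else (if (i : ℕ) + 1 = (j : ℕ) then 1 else 0))
    (hS : ∀ i j : Fin n, S i j =
      if i = j then 1 else if i < j then (-1 : ℝ) ^ n * p ((j : ℕ) - (i : ℕ)) else 0)
    (hrel : (-(-1 : ℝ) ^ n) • R ^ n = S * (Sᵀ)⁻¹)
    (hpd : (S + Sᵀ).PosDef) :
    ∀ z ∈ spectrum ℂ (R.map (Complex.ofReal)), ‖z‖ = 1 := by
  intro z hz
  set ε : ℝ := -(-1 : ℝ) ^ n with hε
  have habsε : |ε| = 1 := by
    rw [hε, abs_neg, abs_pow, abs_neg, abs_one, one_pow]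
  -- S is unipotent upper triangular, so det S = 1
  have hdetS : S.det = 1 := by
    rw [Matrix.det_of_upperTriangular (fun i j (h : (j : Fin n) < i) => by
      rw [hS i j, if_neg h.ne', if_neg (not_lt_of_gt h)])]
    simp [hS]
  have hdetST : IsUnit Sᵀ.det := by
    rw [Matrix.det_transpose, hdetS]; exact isUnit_one
  -- the relation without inverses
  have hrel' : (ε • R ^ n) * Sᵀ = S := by
    rw [hrel, Matrix.mul_assoc, Matrix.nonsing_inv_mul _ hdetST, Matrix.mul_one]
  -- complexify
  set Rc : Matrix (Fin n) (Fin n) ℂ := R.map Complex.ofReal with hRc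
  set Sc : Matrix (Fin n) (Fin n) ℂ := S.map Complex.ofReal with hSc
  have hsmul : ∀ (r : ℝ) (M : Matrix (Fin n) (Fin n) ℂ), r • M = (r : ℂ) • M := by
    intro r M; ext i j
    simp [Matrix.smul_apply, Complex.real_smul]
  have hrelC : ((ε : ℂ) • Rc ^ n) * Scᵀ = Sc := by
    have h := congrArg (Complex.ofRealAm.mapMatrix (m := Fin n)) hrel'
    rw [_root_.map_mul, _root_.map_smul, _root_.map_pow] at h
    have e1 : Complex.ofRealAm.mapMatrix (m := Fin n) R = Rc := rfl
    have e2 : Complex.ofRealAm.mapMatrix (m := Fin n) S = Sc := rfl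
    have e3 : Complex.ofRealAm.mapMatrix (m := Fin n) Sᵀ = Scᵀ := by
      show (Sᵀ).map Complex.ofReal = Scᵀ
      rw [Matrix.transpose_map]
    rw [e1, e2, e3, hsmul] at h
    exact h
  -- determinant of the complexified S
  have hdetSc : Sc.det = 1 := by
    have h := RingHom.map_det Complex.ofRealHom S
    rw [hdetS, _root_.map_one] at h
    exact h.symm
  have hdetScT : IsUnit Scᵀ.det := by
    rw [Matrix.det_transpose, hdetSc]; exact isUnit_one
  -- eigenvector of Rc for z
  have hsing : (z • (1 : Matrix (Fin n) (Fin n) ℂ) - Rc).det = 0 := by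
    have h1 := spectrum.mem_iff.mp hz
    rw [Algebra.algebraMap_eq_smul_one] at h1
    by_contra hne
    exact h1 ((Matrix.isUnit_iff_isUnit_det _).mpr (isUnit_iff_ne_zero.mpr hne))
  obtain ⟨v, hv0, hv⟩ := (Matrix.exists_mulVec_eq_zero_iff).mpr hsing
  have hv' : Rc *ᵥ v = z • v := by
    have := hv
    rw [Matrix.sub_mulVec, sub_eq_zero] at this
    rw [← this, Matrix.smul_mulVec, Matrix.one_mulVec]
  have hpow : ∀ k : ℕ, Rc ^ k *ᵥ v = z ^ k • v := by
    intro k; induction k with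
    | zero => simp
    | succ k ih =>
      rw [pow_succ, ← Matrix.mulVec_mulVec, hv', Matrix.mulVec_smul, ih, smul_smul,
        ← pow_succ']
  -- define w with Sᵀ w = v
  set w : Fin n → ℂ := (Scᵀ)⁻¹ *ᵥ v with hw
  have hvw : Scᵀ *ᵥ w = v := by
    rw [hw, Matrix.mulVec_mulVec, Matrix.mul_nonsing_inv _ hdetScT, Matrix.one_mulVec]
  have hw0 : w ≠ 0 := by
    intro h
    apply hv0
    rw [← hvw, h, Matrix.mulVec_zero]
  -- S w = ε z^n • (Sᵀ w)
  have hSw : Sc *ᵥ w = ((ε : ℂ) * z ^ n) • (Scᵀ *ᵥ w) := by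
    rw [hvw, ← hrelC, ← Matrix.mulVec_mulVec, hvw, Matrix.smul_mulVec, hpow,
      smul_smul]
  -- quadratic forms
  set a : ℂ := star w ⬝ᵥ (Sc *ᵥ w) with ha
  set b : ℂ := star w ⬝ᵥ (Scᵀ *ᵥ w) with hb
  have hab : a = ((ε : ℂ) * z ^ n) * b := by
    rw [ha, hSw, dotProduct_smul, hb, smul_eq_mul]
  have hconj : b = (starRingEnd ℂ) a := by
    rw [ha, hb]
    simp only [hSc, dotProduct, mulVec, dotProduct, map_sum, _root_.map_mul, Finset.mul_sum,
      Matrix.transpose_apply, Matrix.map_apply, Complex.conj_ofReal, Pi.star_apply,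
      RCLike.star_def, Complex.conj_conj]
    rw [Finset.sum_comm]
    refine Finset.sum_congr rfl fun i _ => Finset.sum_congr rfl fun j _ => ?_
    ring
  -- positivity of the real part
  set x : Fin n → ℝ := fun i => (w i).re with hx
  set y : Fin n → ℝ := fun i => (w i).im with hy
  have hre : (a + b).re = x ⬝ᵥ ((S + Sᵀ) *ᵥ x) + y ⬝ᵥ ((S + Sᵀ) *ᵥ y) := by
    have hST : Sc + Scᵀ = (S + Sᵀ).map Complex.ofReal := by
      ext i j
      simp [hSc, Matrix.map_apply, Matrix.transpose_apply]
    have h1 : a + b = star w ⬝ᵥ (((S + Sᵀ).map Complex.ofReal) *ᵥ w) := by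
      rw [ha, hb, ← dotProduct_add, ← Matrix.add_mulVec, hST]
    rw [h1]
    simp only [dotProduct, mulVec, dotProduct, Finset.mul_sum, Complex.re_sum,
      Matrix.map_apply, Pi.star_apply, RCLike.star_def]
    rw [← Finset.sum_add_distrib]
    refine Finset.sum_congr rfl fun i _ => ?_
    rw [← Finset.sum_add_distrib]
    refine Finset.sum_congr rfl fun j _ => ?_
    simp [Complex.mul_re, Complex.mul_im, hx, hy]
  have hxy : x ≠ 0 ∨ y ≠ 0 := by
    by_contra h
    push_neg at h
    apply hw0
    funext i
    have h1 : x i = 0 := by rw [h.1]; rfl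
    have h2 : y i = 0 := by rw [h.2]; rfl
    exact Complex.ext h1 h2
  have hpos : 0 < (a + b).re := by
    rw [hre]
    rcases hxy with hx0 | hy0
    · have h1 : 0 < x ⬝ᵥ ((S + Sᵀ) *ᵥ x) := by
        have := hpd.dotProduct_mulVec_pos hx0
        simpa using this
      have h2 : 0 ≤ y ⬝ᵥ ((S + Sᵀ) *ᵥ y) := by
        have := hpd.posSemidef.dotProduct_mulVec_nonneg y
        simpa using this
      linarith
    · have h1 : 0 ≤ x ⬝ᵥ ((S + Sᵀ) *ᵥ x) := by
        have := hpd.posSemidef.dotProduct_mulVec_nonneg x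
        simpa using this
      have h2 : 0 < y ⬝ᵥ ((S + Sᵀ) *ᵥ y) := by
        have := hpd.dotProduct_mulVec_pos hy0
        simpa using this
      linarith
  -- a ≠ 0
  have hare : 0 < a.re := by
    have h2 : (a + b).re = 2 * a.re := by
      rw [hconj, Complex.add_re, Complex.conj_re]; ring
    linarith [hpos]
  have ha0 : a ≠ 0 := fun h => by simp [h] at hare
  -- take absolute values
  have habs : ‖a‖ = ‖z‖ ^ n * ‖a‖ := by
    conv_lhs => rw [hab, hconj]
    rw [norm_mul, norm_mul, Complex.norm_real, Real.norm_eq_abs, habsε, one_mul, norm_pow,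
      Complex.norm_conj]
  have hzn : ‖z‖ ^ n = 1 := by
    have h0 : ‖a‖ ≠ 0 := by
      simpa using ha0
    have h1 : ‖z‖ ^ n * ‖a‖ = 1 * ‖a‖ := by
      rw [one_mul, ← habs]
    exact mul_right_cancel₀ h0 h1
  -- conclude
  rcases lt_trichotomy ‖z‖ 1 with h | h | h
  · exfalso
    have := pow_lt_one₀ (norm_nonneg z) h (by omega : n ≠ 0)
    rw [hzn] at this; exact lt_irrefl _ this
  · exact h
  · exfalso
    have := one_lt_pow₀ h (by omega : n ≠ 0)
    rw [hzn] at this; exact lt_irrefl _ this
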